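/- Let V = {v \in R^n : Av = b} be a k-dimensional affine subspace where A is a rational matrix. Then the image of V under the quotient map R^n \to R^n/Z^n is homeomorphic to a k-dimensional torus R^k/Z^k. -/

import Mathlib

set_option maxRecDepth 8000

/-- The integer lattice `ℤ^n` inside `ℝ^n`. -/
def intLattice (n : ℕ) : AddSubgroup (Fin n → ℝ) :=
  AddSubgroup.pi Set.univ fun _ => AddSubgroup.zmultiples (1 : ℝ)

/-- The `n`-dimensional torus `ℝ^n/ℤ^n`. -/
abbrev Torus (n : ℕ) := (Fin n → ℝ) ⧸ intLattice n

open Matrix Module Submodule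

lemma mem_intLattice {n : ℕ} {x : Fin n → ℝ} :
    x ∈ intLattice n ↔ ∀ i, ∃ z : ℤ, x i = (z : ℝ) := by
  simp only [intLattice, AddSubgroup.mem_pi, Set.mem_univ, forall_true_left,
    AddSubgroup.mem_zmultiples_iff, zsmul_eq_mul, mul_one]
  exact forall_congr' fun i => ⟨fun ⟨z, h⟩ => ⟨z, h.symm⟩, fun ⟨z, h⟩ => ⟨z, h.symm⟩⟩

instance intLattice_discrete (n : ℕ) : DiscreteTopology (intLattice n) := by
  apply DiscreteTopology.of_forall_le_norm (r := 1) one_pos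
  rintro ⟨x, hx⟩ hne
  have hx' : ∃ i, x i ≠ 0 := by
    by_contra h
    push_neg at h
    exact hne (by ext i; exact h i)
  obtain ⟨i, hi⟩ := hx'
  obtain ⟨z, hz⟩ := mem_intLattice.1 hx i
  have hz0 : z ≠ 0 := by rintro rfl; simp at hz; exact hi hz
  calc (1:ℝ) ≤ |(z:ℝ)| := by exact_mod_cast Int.one_le_abs (by exact_mod_cast hz0)
  _ = ‖x i‖ := by rw [hz]; simp [Real.norm_eq_abs]
  _ ≤ ‖x‖ := norm_le_pi_norm x i

instance torus_compact (n : ℕ) : CompactSpace (Torus n) := by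
  constructor
  have h1 : IsCompact (Set.Icc (0 : Fin n → ℝ) 1) := isCompact_Icc
  have h2 : IsCompact ((QuotientAddGroup.mk : (Fin n → ℝ) → Torus n) '' Set.Icc 0 1) :=
    h1.image continuous_quot_mk
  convert h2 using 1
  apply Set.eq_of_subset_of_subset _ (Set.subset_univ _)
  rintro t -
  induction t using QuotientAddGroup.induction_on with
  | H x =>
    refine ⟨fun i => Int.fract (x i), ⟨fun i => Int.fract_nonneg _, fun i => le_of_lt (Int.fract_lt_one _)⟩, ?_⟩
    rw [QuotientAddGroup.eq]
    rw [mem_intLattice]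
    intro i
    refine ⟨⌊x i⌋, ?_⟩
    simp only [Pi.add_apply, Pi.neg_apply, Int.fract]
    ring

instance torus_t2 (n : ℕ) : T2Space (Torus n) := by
  haveI : IsClosed ((intLattice n : Set (Fin n → ℝ))) := AddSubgroup.isClosed_of_discrete
  infer_instance

def castv {p : ℕ} (v : Fin p → ℚ) : Fin p → ℝ := fun j => ((v j : ℚ) : ℝ)

lemma castv_mulVec {m' n' : ℕ} (M : Matrix (Fin m') (Fin n') ℚ) (v : Fin n' → ℚ) :
    (M.map ((↑) : ℚ → ℝ)).mulVec (castv v) = castv (M.mulVec v) := by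
  ext i
  simp [castv, Matrix.mulVec, dotProduct]

lemma li_cast {ι : Type*} [Fintype ι] [DecidableEq ι] {p : ℕ} {v : ι → Fin p → ℚ}
    (hv : LinearIndependent ℚ v) : LinearIndependent ℝ (fun i => castv (v i)) := by
  classical
  set M : Matrix ι (Fin p) ℚ := Matrix.of v with hM
  have hinj : Function.Injective M.vecMul := Matrix.vecMul_injective_iff.mpr hv
  have hker : LinearMap.ker M.vecMulLinear = ⊥ := by
    rw [LinearMap.ker_eq_bot]
    simpa [Matrix.coe_vecMulLinear] using hinj
  obtain ⟨g, hg⟩ := LinearMap.exists_leftInverse_of_injective M.vecMulLinear hker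
  set B : Matrix (Fin p) ι ℚ := Matrix.of (fun j => g (Pi.single j (1:ℚ))) with hB
  have hgB : ∀ y : Fin p → ℚ, Matrix.vecMul y B = g y := by
    intro y
    conv_rhs => rw [← Finset.univ_sum_single y]
    rw [map_sum]
    ext i
    simp only [Matrix.vecMul, dotProduct, Finset.sum_apply]
    refine Finset.sum_congr rfl fun j _ => ?_
    have hs : (Pi.single j (y j) : Fin p → ℚ) = y j • (Pi.single j (1:ℚ) : Fin p → ℚ) := by
      rw [← Pi.single_smul, smul_eq_mul, mul_one]
    rw [hs, g.map_smul]
    simp [hB, smul_eq_mul]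
  have hMB : M * B = 1 := by
    ext i j
    have h1 : M.vecMul (Pi.single i (1:ℚ)) = M i := by
      ext l
      simp [Matrix.vecMul, dotProduct, Pi.single_apply]
    have h2 : g (M i) = Pi.single i (1:ℚ) := by
      rw [← h1]
      have h3 := LinearMap.congr_fun hg (Pi.single i (1:ℚ))
      simpa [Matrix.vecMulLinear_apply] using h3
    have h4 : (M * B) i j = Matrix.vecMul (M i) B j := by
      simp [Matrix.mul_apply, Matrix.vecMul, dotProduct]
    rw [h4, hgB, h2]
    simp [Matrix.one_apply, Pi.single_apply, eq_comm]
  set M1 : Matrix ι (Fin p) ℝ := M.map ((↑) : ℚ → ℝ) with hM1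
  set B1 : Matrix (Fin p) ι ℝ := B.map ((↑) : ℚ → ℝ) with hB1
  have hMB1 : M1 * B1 = 1 := by
    have h5 : (M * B).map ((Rat.castHom ℝ) : ℚ → ℝ) = (1 : Matrix ι ι ℚ).map (Rat.castHom ℝ) := by
      rw [hMB]
    rw [Matrix.map_mul] at h5
    rwa [Matrix.map_one _ (by simp) (by simp)] at h5
  have hinj1 : Function.Injective M1.vecMul := by
    intro x y hxy
    have h' : x ᵥ* M1 = y ᵥ* M1 := hxy
    have h'' : x ᵥ* M1 ᵥ* B1 = y ᵥ* M1 ᵥ* B1 := by rw [h']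
    rwa [Matrix.vecMul_vecMul, Matrix.vecMul_vecMul, hMB1, Matrix.vecMul_one,
      Matrix.vecMul_one] at h''
  exact Matrix.vecMul_injective_iff.mp hinj1

lemma exists_int_scaling {p : ℕ} (v : Fin p → ℚ) :
    ∃ N : ℕ, 0 < N ∧ ∀ j, ∃ z : ℤ, (N : ℚ) * v j = (z : ℚ) := by
  refine ⟨∏ j, (v j).den, Finset.prod_pos (fun j _ => (v j).pos), fun j => ?_⟩
  obtain ⟨t, ht⟩ := Finset.dvd_prod_of_mem (fun j => (v j).den) (Finset.mem_univ j)
  refine ⟨(t : ℤ) * (v j).num, ?_⟩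
  rw [ht]
  have hden : ((v j).den : ℚ) ≠ 0 := Nat.cast_ne_zero.mpr (v j).den_nz
  have hnum : ((v j).num : ℚ) / ((v j).den : ℚ) = v j := Rat.num_div_den (v j)
  have key : ((v j).den : ℚ) * v j = ((v j).num : ℚ) := by
    rw [mul_comm]; exact Rat.mul_den_eq_num _
  push_cast
  linear_combination (t : ℚ) * key

lemma exists_integer_li_vectors
    {m n k : ℕ} (A : Matrix (Fin m) (Fin n) ℝ) (Aq : Matrix (Fin m) (Fin n) ℚ)
    (hA : A = Aq.map ((↑) : ℚ → ℝ))
    (hdim : Module.finrank ℝ (LinearMap.ker A.mulVecLin) = k) :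
    ∃ u : Fin k → (Fin n → ℝ),
      (∀ i, u i ∈ LinearMap.ker A.mulVecLin) ∧ (∀ i, u i ∈ intLattice n) ∧
      LinearIndependent ℝ u := by
  classical
  set Wq := LinearMap.ker Aq.mulVecLin with hWq
  set dq := Module.finrank ℚ Wq with hdq
  -- rank-nullity over both fields
  have hrnQ : Module.finrank ℚ (LinearMap.range Aq.mulVecLin) + dq = n := by
    rw [hdq, hWq, LinearMap.finrank_range_add_finrank_ker, Module.finrank_fin_fun]
  have hrnR : Module.finrank ℝ (LinearMap.range A.mulVecLin) + k = n := by
    rw [← hdim, LinearMap.finrank_range_add_finrank_ker, Module.finrank_fin_fun]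
  -- rank over ℚ ≤ rank over ℝ
  have hrank : Module.finrank ℚ (LinearMap.range Aq.mulVecLin)
      ≤ Module.finrank ℝ (LinearMap.range A.mulVecLin) := by
    set rq := Module.finrank ℚ (LinearMap.range Aq.mulVecLin) with hrq
    let br := Module.finBasis ℚ (LinearMap.range Aq.mulVecLin)
    have hli0 : LinearIndependent ℚ (fun i : Fin rq => ((br i : Fin m → ℚ))) :=
      br.linearIndependent.map' (Submodule.subtype _) (Submodule.ker_subtype _)
    have hli1 : LinearIndependent ℝ (fun i : Fin rq => castv ((br i : Fin m → ℚ))) :=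
      li_cast hli0
    have hmem : ∀ i : Fin rq, castv ((br i : Fin m → ℚ)) ∈ LinearMap.range A.mulVecLin := by
      intro i
      obtain ⟨x, hx⟩ := (br i).2
      refine ⟨castv x, ?_⟩
      rw [hA, Matrix.mulVecLin_apply, castv_mulVec]
      rw [Matrix.mulVecLin_apply] at hx
      rw [hx]
    let w : Fin rq → LinearMap.range A.mulVecLin := fun i => ⟨_, hmem i⟩
    have hliw : LinearIndependent ℝ w := by
      apply LinearIndependent.of_comp (Submodule.subtype _)
      exact hli1
    simpa using hliw.fintype_card_le_finrank
  have hkdq : k ≤ dq := by omega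
  -- basis of the rational kernel
  let bq := Module.finBasis ℚ Wq
  -- scale to integers
  have hscale : ∀ i : Fin dq, ∃ N : ℕ, 0 < N ∧ ∀ j, ∃ z : ℤ,
      (N : ℚ) * (bq i : Fin n → ℚ) j = (z : ℚ) := fun i => exists_int_scaling _
  choose N hNpos hNz using hscale
  let vq : Fin dq → (Fin n → ℚ) := fun i => (N i : ℚ) • ((bq i : Fin n → ℚ))
  have hvqker : ∀ i, vq i ∈ Wq := fun i => Wq.smul_mem _ (bq i).2
  have hli0 : LinearIndependent ℚ (fun i : Fin dq => ((bq i : Fin n → ℚ))) :=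
    bq.linearIndependent.map' (Submodule.subtype _) (Submodule.ker_subtype _)
  have hlivq : LinearIndependent ℚ vq := by
    have h := hli0.units_smul (fun i => Units.mk0 ((N i : ℚ))
      (by exact_mod_cast (hNpos i).ne'))
    convert h using 1
    ext i j
    simp [vq, Units.smul_def]
  have hliu0 : LinearIndependent ℝ (fun i : Fin dq => castv (vq i)) := li_cast hlivq
  refine ⟨(fun i : Fin dq => castv (vq i)) ∘ Fin.castLE hkdq, ?_, ?_, ?_⟩
  · intro i
    have hker : Aq.mulVec (vq (Fin.castLE hkdq i)) = 0 := hvqker _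
    rw [LinearMap.mem_ker, Matrix.mulVecLin_apply, Function.comp_apply, hA, castv_mulVec, hker]
    ext j
    simp [castv]
  · intro i
    rw [mem_intLattice]
    intro j
    obtain ⟨z, hz⟩ := hNz (Fin.castLE hkdq i) j
    refine ⟨z, ?_⟩
    simp only [Function.comp_apply, castv, vq, Pi.smul_apply, smul_eq_mul]
    rw [hz]
    norm_cast
  · exact hliu0.comp (Fin.castLE hkdq) (Fin.castLE_injective _)

/-- The image of a `k`-dimensional affine subspace `V = {v : Av = b}` with rational
coefficient matrix `A` under the quotient map `ℝ^n → ℝ^n/ℤ^n` is homeomorphic to a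
`k`-dimensional torus `ℝ^k/ℤ^k`. -/
theorem image_rational_affine_subspace_homeomorph_torus
    (n m k : ℕ) (A : Matrix (Fin m) (Fin n) ℝ)
    (hrat : ∀ i j, ∃ q : ℚ, A i j = (q : ℝ)) (b : Fin m → ℝ)
    (V : Set (Fin n → ℝ)) (hV : V = {v | A.mulVec v = b}) (hne : V.Nonempty)
    (hdim : Module.finrank ℝ (LinearMap.ker A.mulVecLin) = k) :
    Nonempty
      ((((QuotientAddGroup.mk : (Fin n → ℝ) → Torus n) '' V : Set (Torus n))) ≃ₜ Torus k) := by
  classical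
  obtain ⟨v₀, hv₀⟩ := hne
  have hv₀V : A.mulVec v₀ = b := by rw [hV] at hv₀; exact hv₀
  -- rational matrix
  choose Aq hAq using hrat
  have hA : A = (Matrix.of Aq).map ((↑) : ℚ → ℝ) := by
    ext i j; exact hAq i j
  set W : Submodule ℝ (Fin n → ℝ) := LinearMap.ker A.mulVecLin with hW
  obtain ⟨u, huW, huZ, huli⟩ := exists_integer_li_vectors A (Matrix.of Aq) hA hdim
  -- the lattice inside W
  set L : Submodule ℤ W :=
    (AddSubgroup.toIntSubmodule (intLattice n)).comap (W.subtype.restrictScalars ℤ) with hL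
  have memL : ∀ x : W, x ∈ L ↔ (x : Fin n → ℝ) ∈ intLattice n := by
    intro x; rfl
  haveI : DiscreteTopology L := by
    refine DiscreteTopology.of_continuous_injective
      (f := fun x : L => (⟨(x : W), (memL _).1 x.2⟩ : intLattice n)) ?_ ?_
    · exact Continuous.subtype_mk (continuous_subtype_val.comp continuous_subtype_val) _
    · intro a b hab
      have h := congrArg (fun y : intLattice n => (y : Fin n → ℝ)) hab
      exact Subtype.ext (Subtype.ext h)
  -- u as elements of W
  let u' : Fin k → W := fun i => ⟨u i, huW i⟩
  have huli' : LinearIndependent ℝ u' := by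
    apply LinearIndependent.of_comp W.subtype
    exact huli
  have hu'L : ∀ i, u' i ∈ L := fun i => (memL _).2 (huZ i)
  have hWfr : Module.finrank ℝ W = k := hdim
  have hspan : Submodule.span ℝ (Set.range u') = ⊤ := by
    apply Submodule.eq_top_of_finrank_eq
    rw [finrank_span_eq_card huli', hWfr, Fintype.card_fin]
  haveI : IsZLattice ℝ L := by
    constructor
    rw [eq_top_iff, ← hspan]
    exact Submodule.span_mono (Set.range_subset_iff.2 hu'L)
  haveI : Module.Free ℤ L := ZLattice.module_free ℝ L
  haveI : Module.Finite ℤ L := ZLattice.module_finite ℝ L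
  have hcard : Fintype.card (Module.Free.ChooseBasisIndex ℤ L) = k := by
    rw [← Module.finrank_eq_card_chooseBasisIndex, ZLattice.rank ℝ L, hWfr]
  let b' : Basis (Fin k) ℤ L :=
    (Module.Free.chooseBasis ℤ L).reindex (Fintype.equivFinOfCardEq hcard)
  let c : Basis (Fin k) ℝ W := b'.ofZLatticeBasis ℝ L
  -- the linear map
  let φ : (Fin k → ℝ) →ₗ[ℝ] (Fin n → ℝ) := W.subtype ∘ₗ (c.equivFun.symm : _ →ₗ[ℝ] _)
  have hφ : ∀ x, φ x = ((c.equivFun.symm x : W) : Fin n → ℝ) := fun x => rfl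
  have hφmem : ∀ x, φ x ∈ W := fun x => (c.equivFun.symm x).2
  have key1 : ∀ x ∈ intLattice k, φ x ∈ intLattice n := by
    intro x hx
    rw [hφ, Basis.equivFun_symm_apply]
    choose z hz using mem_intLattice.1 hx
    push_cast [Submodule.coe_sum]
    apply AddSubgroup.sum_mem
    intro i _
    rw [hz i, Int.cast_smul_eq_zsmul]
    apply AddSubgroup.zsmul_mem
    have : (c i : Fin n → ℝ) ∈ intLattice n := by
      have h1 : c i = (b' i : W) := b'.ofZLatticeBasis_apply ℝ L i
      rw [h1]
      exact (memL _).1 (b' i).2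
    exact this
  have key2 : ∀ x, φ x ∈ intLattice n → x ∈ intLattice k := by
    intro x hx
    have hwL : c.equivFun.symm x ∈ L := (memL _).2 (by rw [← hφ]; exact hx)
    rw [mem_intLattice]
    intro i
    refine ⟨b'.repr ⟨_, hwL⟩ i, ?_⟩
    have h2 := b'.ofZLatticeBasis_repr_apply ℝ L ⟨_, hwL⟩ i
    have h3 : c.repr (c.equivFun.symm x) i = x i := by
      rw [← Basis.equivFun_apply, LinearEquiv.apply_symm_apply]
    rw [← h3]
    exact h2
  -- the induced map on tori
  have hcomap : intLattice k ≤ (intLattice n).comap φ.toAddMonoidHom :=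
    fun x hx => key1 x hx
  let Φ : Torus k → Torus n :=
    QuotientAddGroup.map (intLattice k) (intLattice n) φ.toAddMonoidHom hcomap
  have hΦmk : ∀ x : Fin k → ℝ, Φ (QuotientAddGroup.mk x) = QuotientAddGroup.mk (φ x) :=
    fun x => rfl
  have hΦc : Continuous Φ := by
    rw [(QuotientAddGroup.isQuotientMap_mk (intLattice k)).continuous_iff]
    have : (Φ ∘ QuotientAddGroup.mk) = (QuotientAddGroup.mk ∘ φ) := by
      funext x; exact hΦmk x
    rw [this]
    exact continuous_quot_mk.comp φ.continuous_of_finiteDimensional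
  let Ψ : Torus k → Torus n := fun t => (QuotientAddGroup.mk v₀ : Torus n) + Φ t
  have hΨc : Continuous Ψ := continuous_const.add hΦc
  have hΨinj : Function.Injective Ψ := by
    intro t₁ t₂ h
    induction t₁ using QuotientAddGroup.induction_on with
    | H x₁ =>
    induction t₂ using QuotientAddGroup.induction_on with
    | H x₂ =>
    have h' : Φ (QuotientAddGroup.mk x₁) = Φ (QuotientAddGroup.mk x₂) := by
      exact add_left_cancel h
    rw [hΦmk, hΦmk] at h'
    rw [QuotientAddGroup.eq] at h'
    have hmem : φ (x₂ - x₁) ∈ intLattice n := by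
      rw [map_sub]
      have : -φ x₁ + φ x₂ = φ x₂ - φ x₁ := by abel
      rwa [this] at h'
    have := key2 _ hmem
    rw [QuotientAddGroup.eq]
    have h4 : -x₁ + x₂ = x₂ - x₁ := by abel
    rwa [h4]
  have hΨrange : Set.range Ψ = (QuotientAddGroup.mk : (Fin n → ℝ) → Torus n) '' V := by
    ext t
    constructor
    · rintro ⟨s, rfl⟩
      induction s using QuotientAddGroup.induction_on with
      | H x =>
      refine ⟨v₀ + φ x, ?_, ?_⟩
      · rw [hV]
        show A.mulVec (v₀ + φ x) = b
        have hker : A.mulVec (φ x) = 0 := hφmem x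
        rw [Matrix.mulVec_add, hv₀V, hker, add_zero]
      · show QuotientAddGroup.mk (v₀ + φ x) = Ψ (QuotientAddGroup.mk x)
        show _ = (QuotientAddGroup.mk v₀ : Torus n) + Φ (QuotientAddGroup.mk x)
        rw [hΦmk]
        rfl
    · rintro ⟨v, hvV, rfl⟩
      have hvW : v - v₀ ∈ W := by
        rw [hW, LinearMap.mem_ker, Matrix.mulVecLin_apply, Matrix.mulVec_sub, hv₀V]
        rw [hV] at hvV
        rw [hvV]
        simp
      refine ⟨QuotientAddGroup.mk (c.equivFun ⟨v - v₀, hvW⟩), ?_⟩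
      show (QuotientAddGroup.mk v₀ : Torus n) + Φ _ = _
      rw [hΦmk]
      have hφv : φ (c.equivFun ⟨v - v₀, hvW⟩) = v - v₀ := by
        rw [hφ, LinearEquiv.symm_apply_apply]
      rw [hφv]
      have : QuotientAddGroup.mk (v₀ + (v - v₀)) = (QuotientAddGroup.mk v : Torus n) := by
        congr 1
        abel
      rw [← this]
      rfl
  have hmemrange : ∀ t, Ψ t ∈ (QuotientAddGroup.mk : (Fin n → ℝ) → Torus n) '' V := by
    intro t
    rw [← hΨrange]
    exact ⟨t, rfl⟩
  let e : Torus k ≃ ((QuotientAddGroup.mk : (Fin n → ℝ) → Torus n) '' V : Set (Torus n)) := by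
    refine Equiv.ofBijective (fun t => ⟨Ψ t, hmemrange t⟩) ⟨?_, ?_⟩
    · intro t₁ t₂ h
      exact hΨinj (congrArg Subtype.val h)
    · rintro ⟨y, hy⟩
      rw [← hΨrange] at hy
      obtain ⟨t, ht⟩ := hy
      exact ⟨t, Subtype.ext ht⟩
  have hec : Continuous e := Continuous.subtype_mk hΨc _
  exact ⟨(hec.homeoOfEquivCompactToT2 (f := e)).symm⟩
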